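/- Let χ, χ' ∈ 𝔤* with χ(𝔫⁺) = χ'(𝔫⁺) = 0, λ ∈ Λ_χ and μ ∈ Λ_{χ'}, and write z_λ = 1⊗1 ∈ Z_χ(λ) and u_μ = 1⊗1 ∈ Z_{χ'}(μ). Then the U_{χ+χ'}(𝔤)-module Z_χ(λ) ⊗ Z_{χ'}(μ) has a 𝕂-basis consisting of the elements e_{−γ_D}^{c_D}⋯e_{−γ_1}^{c_1}·(z_λ ⊗ e_{−γ_D}^{d_D}⋯e_{−γ_1}^{d_1} u_μ) for 0 ≤ c_1,…,c_D, d_1,…,d_D < p. -/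

import Mathlib

/-!
Statement 3 (Lemma 2.6).  For `χ, χ' ∈ 𝔤*` with `χ(𝔫⁺) = χ'(𝔫⁺) = 0`, `λ ∈ Λ_χ`,
`μ ∈ Λ_{χ'}`, the `U_{χ+χ'}(𝔤)`-module `Z_χ(λ) ⊗ Z_{χ'}(μ)` has a basis consisting of
the elements `e_{−γ_D}^{c_D} ⋯ e_{−γ_1}^{c_1} · (z_λ ⊗ e_{−γ_D}^{d_D} ⋯ e_{−γ_1}^{d_1} u_μ)`
for `0 ≤ c_i, d_i < p`.
-/

universe u v

section AuxLemmas
open scoped TensorProduct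

universe w₁ w₂

section Aux
variable {K : Type u} [Field K] {M : Type w₁} {N : Type w₂}
  [AddCommGroup M] [Module K M] [AddCommGroup N] [Module K N]

lemma addPow_apply_tmul (f : Module.End K M) (g : Module.End K N) (n : ℕ)
    (x : M) (y : N) :
    ((LinearMap.rTensor N f + LinearMap.lTensor M g) ^ n) (x ⊗ₜ[K] y)
      = ∑ j ∈ Finset.range (n + 1),
          n.choose j • ((f ^ j) x ⊗ₜ[K] (g ^ (n - j)) y) := by
  have hc : Commute (LinearMap.rTensor N f) (LinearMap.lTensor M g) := by
    show _ * _ = _ * _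
    rw [Module.End.mul_eq_comp, Module.End.mul_eq_comp, LinearMap.rTensor_comp_lTensor,
      LinearMap.lTensor_comp_rTensor]
  rw [hc.add_pow, LinearMap.sum_apply]
  refine Finset.sum_congr rfl fun j _ => ?_
  rw [Module.End.mul_apply, Module.End.mul_apply, Module.End.natCast_apply,
    map_nsmul, map_nsmul, LinearMap.lTensor_pow, LinearMap.rTensor_pow,
    LinearMap.lTensor_tmul, LinearMap.rTensor_tmul]
end Aux

section Aux2
variable {K : Type u} [Field K] {M : Type w₁} {N : Type w₂}
  [AddCommGroup M] [Module K M] [AddCommGroup N] [Module K N]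

lemma key_span {ι : Type*} (f : ι → Module.End K M) (g : ι → Module.End K N)
    (ht : ι → ℕ) [DecidableEq ι] (hht : ∀ r, 0 < ht r) (z : M) :
    ∀ (L : List ι), L.Nodup → ∀ (a : ι → ℕ) (w : N),
    ((L.map fun r => (LinearMap.rTensor N (f r) + LinearMap.lTensor M (g r)) ^ a r).prod)
        (z ⊗ₜ[K] w)
      - ((L.map fun r => (f r) ^ a r).prod z) ⊗ₜ[K] w
    ∈ Submodule.span K {x : M ⊗[K] N | ∃ (k : ι → ℕ) (w' : N), (∀ s, k s ≤ a s) ∧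
        ((L.map fun r => k r * ht r).sum < (L.map fun r => a r * ht r).sum) ∧
        x = ((L.map fun r => (f r) ^ (k r)).prod z) ⊗ₜ[K] w'} := by
  intro L
  induction L with
  | nil => intro _ a w; simp
  | cons r L ih =>
    intro hnd a w
    obtain ⟨hr, hnd'⟩ := List.nodup_cons.mp hnd
    -- notation
    set S : Set (M ⊗[K] N) := {x : M ⊗[K] N | ∃ (k : ι → ℕ) (w' : N), (∀ s, k s ≤ a s) ∧
        (((r :: L).map fun s => k s * ht s).sum < ((r :: L).map fun s => a s * ht s).sum) ∧
        x = (((r :: L).map fun s => (f s) ^ (k s)).prod z) ⊗ₜ[K] w'} with hS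
    have mem_gen : ∀ (j : ℕ) (k : ι → ℕ) (w' : N), j ≤ a r → (∀ s, k s ≤ a s) →
        j * ht r + (L.map fun s => k s * ht s).sum
          < a r * ht r + (L.map fun s => a s * ht s).sum →
        ((f r)^j) ((L.map fun s => (f s)^(k s)).prod z) ⊗ₜ[K] w' ∈ Submodule.span K S := by
      intro j k w' hj hk hlt
      apply Submodule.subset_span
      refine ⟨Function.update k r j, w', ?_, ?_, ?_⟩
      · intro s
        rcases eq_or_ne s r with h | h
        · subst h; rw [Function.update_self]; exact hj
        · rw [Function.update_of_ne h]; exact hk s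
      · have h1 : (L.map fun s => (Function.update k r j) s * ht s)
            = (L.map fun s => k s * ht s) := by
          refine List.map_congr_left fun s hs => ?_
          rw [Function.update_of_ne (by rintro rfl; exact hr hs)]
        rw [List.map_cons, List.map_cons, List.sum_cons, List.sum_cons, h1,
          Function.update_self]
        exact hlt
      · have h2 : (L.map fun s => (f s) ^ (Function.update k r j) s)
            = (L.map fun s => (f s) ^ (k s)) := by
          refine List.map_congr_left fun s hs => ?_
          rw [Function.update_of_ne (by rintro rfl; exact hr hs)]
        rw [List.map_cons, List.prod_cons, h2, Function.update_self, Module.End.mul_apply]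
    -- abbreviations
    set P : Module.End K (M ⊗[K] N) :=
      ((L.map fun s => (LinearMap.rTensor N (f s) + LinearMap.lTensor M (g s)) ^ a s).prod)
      with hP
    set m : Module.End K M := ((L.map fun s => (f s) ^ a s).prod) with hm
    set e : M ⊗[K] N := P (z ⊗ₜ[K] w) - (m z) ⊗ₜ[K] w with he
    have hecard : e ∈ Submodule.span K {x : M ⊗[K] N | ∃ (k : ι → ℕ) (w' : N),
        (∀ s, k s ≤ a s) ∧
        ((L.map fun s => k s * ht s).sum < (L.map fun s => a s * ht s).sum) ∧
        x = ((L.map fun s => (f s) ^ (k s)).prod z) ⊗ₜ[K] w'} := ih hnd' a w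
    set F : Module.End K (M ⊗[K] N) :=
      (LinearMap.rTensor N (f r) + LinearMap.lTensor M (g r)) ^ a r with hF
    have hFe : F e ∈ Submodule.span K S := by
      have hmap : Submodule.map F (Submodule.span K {x : M ⊗[K] N | ∃ (k : ι → ℕ) (w' : N),
          (∀ s, k s ≤ a s) ∧
          ((L.map fun s => k s * ht s).sum < (L.map fun s => a s * ht s).sum) ∧
          x = ((L.map fun s => (f s) ^ (k s)).prod z) ⊗ₜ[K] w'}) ≤ Submodule.span K S := by
        rw [Submodule.map_span]
        refine Submodule.span_le.mpr ?_
        rintro _ ⟨x, ⟨k, w', hk, hwt, rfl⟩, rfl⟩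
        rw [hF, addPow_apply_tmul]
        refine Submodule.sum_mem _ fun j hj => ?_
        refine nsmul_mem ?_ _
        refine mem_gen j k _ (Nat.lt_succ_iff.mp (Finset.mem_range.mp hj)) hk ?_
        exact Nat.add_lt_add_of_le_of_lt
          (Nat.mul_le_mul_right _ (Nat.lt_succ_iff.mp (Finset.mem_range.mp hj))) hwt
      exact hmap (Submodule.mem_map_of_mem hecard)
    have hmain : F ((m z) ⊗ₜ[K] w)
        = (∑ j ∈ Finset.range (a r), (a r).choose j •
            ((f r ^ j) (m z) ⊗ₜ[K] (g r ^ (a r - j)) w))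
          + ((f r) ^ (a r)) (m z) ⊗ₜ[K] w := by
      rw [hF, addPow_apply_tmul, Finset.sum_range_succ, Nat.choose_self, Nat.sub_self,
        pow_zero, Module.End.one_apply, one_smul]
    have hexp : (((r :: L).map fun s =>
          (LinearMap.rTensor N (f s) + LinearMap.lTensor M (g s)) ^ a s).prod) (z ⊗ₜ[K] w)
        - (((r :: L).map fun s => (f s) ^ a s).prod z) ⊗ₜ[K] w
        = (∑ j ∈ Finset.range (a r), (a r).choose j •
            ((f r ^ j) (m z) ⊗ₜ[K] (g r ^ (a r - j)) w)) + F e := by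
      rw [List.map_cons, List.prod_cons, List.map_cons, List.prod_cons,
        Module.End.mul_apply, Module.End.mul_apply]
      have : P (z ⊗ₜ[K] w) = (m z) ⊗ₜ[K] w + e := by rw [he]; abel
      rw [this, map_add, hmain]
      abel
    rw [hexp]
    refine Submodule.add_mem _ ?_ hFe
    refine Submodule.sum_mem _ fun j hj => ?_
    refine nsmul_mem ?_ _
    refine mem_gen j a _ (le_of_lt (Finset.mem_range.mp hj)) (fun s => le_rfl) ?_
    exact Nat.add_lt_add_right
      (Nat.mul_lt_mul_of_lt_of_le (Finset.mem_range.mp hj) le_rfl (hht r)) _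
end Aux2

end AuxLemmas


attribute [local instance] LieRing.ofAssociativeRing

/-- The Chevalley-type data attached to the Lie algebra `𝔤` of a reductive algebraic
group over `K` satisfying the standard hypotheses, in characteristic `p`:
a maximal torus part `𝔱`, nilradicals `𝔫⁺`, `𝔫⁻`, positive root vectors `e_{γ_r}`,
negative root vectors `e_{−γ_r}` (for the enumeration `Φ⁺ = {γ₁,…,γ_D}` with
non-decreasing heights), the restricted structure `x ↦ x^{[p]}`, and the roots as
linear functionals on `𝔱`. -/
structure RootedLieAlgebra (K : Type u) [Field K] (p : ℕ) where
  /-- the Lie algebra `𝔤` -/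
  g : Type v
  [lieRing : LieRing g]
  [lieAlg : LieAlgebra K g]
  /-- the restricted structure `x ↦ x^{[p]}` -/
  pow : g → g
  /-- the Cartan subalgebra `𝔱 = Lie T` -/
  t : LieSubalgebra K g
  /-- `𝔫⁺ = ⊕_{α ∈ Φ⁺} 𝔤_α` -/
  nplus : LieSubalgebra K g
  /-- `𝔫⁻ = ⊕_{α ∈ Φ⁺} 𝔤_{−α}` -/
  nminus : LieSubalgebra K g
  /-- the number `D` of positive roots -/
  D : ℕ
  /-- the heights `ht γ_r` of the positive roots -/
  ht : Fin D → ℕ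
  ht_pos : ∀ r, 0 < ht r
  /-- the enumeration is chosen so that `r < l` implies `ht γ_r ≤ ht γ_l` -/
  ht_mono : Monotone ht
  /-- positive root vectors `e_{γ_r}` -/
  epos : Fin D → g
  /-- negative root vectors `e_{−γ_r}` -/
  eneg : Fin D → g
  epos_mem : ∀ r, epos r ∈ nplus
  eneg_mem : ∀ r, eneg r ∈ nminus
  epos_span : nplus.toSubmodule = Submodule.span K (Set.range epos)
  eneg_span : nminus.toSubmodule = Submodule.span K (Set.range eneg)
  /-- the restricted structure preserves `𝔱` -/
  powT : t → t
  powT_coe : ∀ h : t, (powT h : g) = pow (h : g)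
  pow_epos : ∀ r, pow (epos r) = 0
  pow_eneg : ∀ r, pow (eneg r) = 0
  /-- the positive roots `γ_r`, as linear functionals on `𝔱` -/
  root : Fin D → Module.Dual K t
  bracket_epos : ∀ (h : t) (r : Fin D), ⁅(h : g), epos r⁆ = root r h • epos r
  bracket_eneg : ∀ (h : t) (r : Fin D), ⁅(h : g), eneg r⁆ = -(root r h) • eneg r

attribute [instance] RootedLieAlgebra.lieRing RootedLieAlgebra.lieAlg

namespace RootedLieAlgebra

variable {K : Type u} [Field K] {p : ℕ}

/-- A representation of `𝔤` on a `K`-vector space. -/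
structure Rep (𝔇 : RootedLieAlgebra.{u, v} K p) where
  M : Type v
  [isAddCommGroup : AddCommGroup M]
  [isModule : Module K M]
  act : 𝔇.g →ₗ⁅K⁆ Module.End K M

attribute [instance] Rep.isAddCommGroup Rep.isModule

variable {𝔇 : RootedLieAlgebra.{u, v} K p}

/-- `ρ` is a module over the reduced enveloping algebra `U_χ(𝔤)`, i.e.
`x^p − x^{[p]}` acts by the scalar `χ(x)^p`. -/
def Rep.IsReduced (ρ : 𝔇.Rep) (χ : Module.Dual K 𝔇.g) : Prop :=
  ∀ x : 𝔇.g, ρ.act x ^ p = ρ.act (𝔇.pow x) + χ x ^ p • (1 : Module.End K ρ.M)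

/-- `λ ∈ Λ_χ`, i.e. `λ(h)^p − λ(h^{[p]}) = χ(h)^p` for all `h ∈ 𝔱`. -/
def InLambda (χ : Module.Dual K 𝔇.g) (lam : Module.Dual K 𝔇.t) : Prop :=
  ∀ h : 𝔇.t, lam h ^ p - lam (𝔇.powT h) = χ (h : 𝔇.g) ^ p

/-- The monomial operator `e_{−γ_D}^{a_D} ⋯ e_{−γ_1}^{a_1}` acting on `ρ`. -/
def lowerMon (ρ : 𝔇.Rep) (a : Fin 𝔇.D → ℕ) : Module.End K ρ.M :=
  ((List.finRange 𝔇.D).reverse.map fun r => ρ.act (𝔇.eneg r) ^ a r).prod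

/-- `ρ`, with generator `z`, is the baby Verma module `Z_χ(λ)`: a `U_χ(𝔤)`-module with
highest-weight generator `z = z_λ` (killed by `𝔫⁺`, with `𝔱` acting via `λ`) such that
the monomials `e_{−γ_D}^{a_D} ⋯ e_{−γ_1}^{a_1} z_λ` with `0 ≤ a_i < p` form a basis. -/
structure Rep.IsBabyVerma (ρ : 𝔇.Rep) (χ : Module.Dual K 𝔇.g)
    (lam : Module.Dual K 𝔇.t) (z : ρ.M) : Prop where
  reduced : ρ.IsReduced χ
  hw_nplus : ∀ x ∈ 𝔇.nplus, ρ.act x z = 0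
  hw_t : ∀ h : 𝔇.t, ρ.act (h : 𝔇.g) z = lam h • z
  monomial_basis : ∃ b : Module.Basis (Fin 𝔇.D → Fin p) K ρ.M,
    ∀ a, b a = lowerMon ρ (fun r => (a r : ℕ)) z

/-- The height `ht(e_{−γ_D}^{a_D} ⋯ e_{−γ_1}^{a_1} z_λ) = −∑ a_r · ht(γ_r)`. -/
def htMon (𝔇 : RootedLieAlgebra.{u, v} K p) (a : Fin 𝔇.D → Fin p) : ℤ :=
  -∑ r, ((a r : ℕ) : ℤ) * (𝔇.ht r : ℤ)

/-- `V_{≥ n}`: the span of the monomial basis vectors of height at least `n`. -/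
def Vge (ρ : 𝔇.Rep) (z : ρ.M) (n : ℤ) : Submodule K ρ.M :=
  Submodule.span K
    {v | ∃ a : Fin 𝔇.D → Fin p, n ≤ htMon 𝔇 a ∧ v = lowerMon ρ (fun r => (a r : ℕ)) z}

end RootedLieAlgebra

open RootedLieAlgebra

open scoped TensorProduct

namespace RootedLieAlgebra

variable {K : Type u} [Field K] {p : ℕ} {𝔇 : RootedLieAlgebra.{u, v} K p}

/-- The ordered monomial `f_D^{a_D} ∘ ⋯ ∘ f_1^{a_1}` built from a family of
endomorphisms indexed by the positive roots. -/
def endMon {M : Type v} [AddCommGroup M] [Module K M] (D : ℕ)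
    (f : Fin D → Module.End K M) (a : Fin D → ℕ) : Module.End K M :=
  ((List.finRange D).reverse.map fun r => f r ^ a r).prod

/-- The action of `x ∈ 𝔤` on the tensor product `M ⊗ N` of a `U_χ(𝔤)`-module and a
`U_{χ'}(𝔤)`-module: `x·(m⊗n) = (x·m)⊗n + m⊗(x·n)`.  This makes `M ⊗ N` a
`U_{χ+χ'}(𝔤)`-module. -/
noncomputable def tensAct (ρ ρ' : 𝔇.Rep) (x : 𝔇.g) : Module.End K (ρ.M ⊗[K] ρ'.M) :=
  LinearMap.rTensor ρ'.M (ρ.act x) + LinearMap.lTensor ρ.M (ρ'.act x)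

end RootedLieAlgebra

/-- Lemma 2.6: the elements
`e_{−γ_D}^{c_D} ⋯ e_{−γ_1}^{c_1} (z_λ ⊗ e_{−γ_D}^{d_D} ⋯ e_{−γ_1}^{d_1} u_μ)`,
`0 ≤ c_i, d_i < p`, form a `𝕂`-basis of `Z_χ(λ) ⊗ Z_{χ'}(μ)` (where `e_{−γ_r}` acts on
the tensor product by the `U_{χ+χ'}(𝔤)`-module structure). -/
theorem statement3 {K : Type u} [Field K] [IsAlgClosed K] {p : ℕ} [Fact p.Prime]
    [CharP K p] (𝔇 : RootedLieAlgebra.{u, v} K p)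
    (χ χ' : Module.Dual K 𝔇.g)
    (hχ : ∀ x ∈ 𝔇.nplus, χ x = 0) (hχ' : ∀ x ∈ 𝔇.nplus, χ' x = 0)
    (lam mu : Module.Dual K 𝔇.t) (hlam : InLambda χ lam) (hmu : InLambda χ' mu)
    (ρ ρ' : 𝔇.Rep) (z : ρ.M) (u : ρ'.M)
    (hz : ρ.IsBabyVerma χ lam z) (hu : ρ'.IsBabyVerma χ' mu u) :
    ∃ B : Module.Basis ((Fin 𝔇.D → Fin p) × (Fin 𝔇.D → Fin p)) K (ρ.M ⊗[K] ρ'.M),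
      ∀ cd : (Fin 𝔇.D → Fin p) × (Fin 𝔇.D → Fin p),
        B cd = endMon 𝔇.D (fun r => tensAct ρ ρ' (𝔇.eneg r)) (fun r => (cd.1 r : ℕ))
          (z ⊗ₜ[K] (lowerMon ρ' (fun r => (cd.2 r : ℕ)) u)) :=  by
  classical
  obtain ⟨b, hb⟩ := hz.monomial_basis
  obtain ⟨b', hb'⟩ := hu.monomial_basis
  haveI : Module.Finite K ρ.M := Module.Finite.of_basis b
  haveI : Module.Finite K ρ'.M := Module.Finite.of_basis b'
  set L : List (Fin 𝔇.D) := (List.finRange 𝔇.D).reverse with hL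
  have hLnd : L.Nodup := List.nodup_reverse.mpr (List.nodup_finRange 𝔇.D)
  set v : (Fin 𝔇.D → Fin p) × (Fin 𝔇.D → Fin p) → ρ.M ⊗[K] ρ'.M := fun cd =>
    endMon 𝔇.D (fun r => tensAct ρ ρ' (𝔇.eneg r)) (fun r => (cd.1 r : ℕ))
      (z ⊗ₜ[K] (lowerMon ρ' (fun r => (cd.2 r : ℕ)) u)) with hv
  have key := key_span (K := K) (fun r => ρ.act (𝔇.eneg r)) (fun r => ρ'.act (𝔇.eneg r))
    𝔇.ht 𝔇.ht_pos z L hLnd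
  -- main spanning claim by strong induction on the weight
  have main : ∀ n : ℕ, ∀ c d : Fin 𝔇.D → Fin p,
      (L.map fun r => ((c r : ℕ)) * 𝔇.ht r).sum ≤ n →
      (lowerMon ρ (fun r => (c r : ℕ)) z) ⊗ₜ[K] (lowerMon ρ' (fun r => (d r : ℕ)) u)
        ∈ Submodule.span K (Set.range v) := by
    intro n
    induction n using Nat.strong_induction_on with
    | _ n ih =>
      intro c d hn
      have hk := key (fun r => (c r : ℕ)) (lowerMon ρ' (fun r => (d r : ℕ)) u)
      have hveq : v (c, d)
          = ((L.map fun r => (LinearMap.rTensor ρ'.M (ρ.act (𝔇.eneg r))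
              + LinearMap.lTensor ρ.M (ρ'.act (𝔇.eneg r))) ^ ((c r : ℕ))).prod)
            (z ⊗ₜ[K] (lowerMon ρ' (fun r => (d r : ℕ)) u)) := rfl
      have hmon : (lowerMon ρ (fun r => (c r : ℕ)) z)
          = ((L.map fun r => (ρ.act (𝔇.eneg r)) ^ ((c r : ℕ))).prod z) := rfl
      have hme : v (c, d) ∈ Submodule.span K (Set.range v) :=
        Submodule.subset_span ⟨(c, d), rfl⟩
      rw [hmon]
      have hrw : ((L.map fun r => (ρ.act (𝔇.eneg r)) ^ ((c r : ℕ))).prod z)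
            ⊗ₜ[K] (lowerMon ρ' (fun r => (d r : ℕ)) u)
          = v (c, d) - (v (c, d)
            - ((L.map fun r => (ρ.act (𝔇.eneg r)) ^ ((c r : ℕ))).prod z)
              ⊗ₜ[K] (lowerMon ρ' (fun r => (d r : ℕ)) u)) := by abel
      rw [hrw]
      refine Submodule.sub_mem _ hme ?_
      rw [hveq] at *
      refine Submodule.span_le.mpr ?_ hk
      rintro x ⟨k, w', hkle, hwt, rfl⟩
      have hklt : ∀ r, k r < p := fun r => lt_of_le_of_lt (hkle r) (c r).isLt
      -- express w' via the basis b'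
      have hw' : w' ∈ Submodule.span K (Set.range b') := by
        rw [b'.span_eq]; trivial
      induction hw' using Submodule.span_induction with
      | mem y hy =>
        obtain ⟨e, rfl⟩ := hy
        have hkwt : (L.map fun r => k r * 𝔇.ht r).sum < n :=
          lt_of_lt_of_le hwt hn
        have := ih ((L.map fun r => k r * 𝔇.ht r).sum) hkwt
          (fun r => (⟨k r, hklt r⟩ : Fin p)) e (le_of_eq rfl)
        rw [hb' e]
        exact this
      | zero => rw [TensorProduct.tmul_zero]; exact Submodule.zero_mem _
      | add y₁ y₂ h₁ h₂ hp₁ hp₂ =>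
        rw [TensorProduct.tmul_add]; exact Submodule.add_mem _ hp₁ hp₂
      | smul a y h hp =>
        rw [TensorProduct.tmul_smul]; exact Submodule.smul_mem _ _ hp
  -- spanning
  have hspan : ⊤ ≤ Submodule.span K (Set.range v) := by
    rw [← (b.tensorProduct b').span_eq]
    refine Submodule.span_le.mpr ?_
    rintro _ ⟨cd, rfl⟩
    rw [Module.Basis.tensorProduct_apply', hb cd.1, hb' cd.2]
    exact main _ cd.1 cd.2 le_rfl
  have hcard : Fintype.card ((Fin 𝔇.D → Fin p) × (Fin 𝔇.D → Fin p))
      = Module.finrank K (ρ.M ⊗[K] ρ'.M) := by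
    rw [Module.finrank_tensorProduct, Module.finrank_eq_card_basis b,
      Module.finrank_eq_card_basis b', Fintype.card_prod]
  refine ⟨basisOfTopLeSpanOfCardEqFinrank v hspan hcard, fun cd => ?_⟩
  have : ⇑(basisOfTopLeSpanOfCardEqFinrank v hspan hcard) = v :=
    coe_basisOfTopLeSpanOfCardEqFinrank v hspan hcard
  rw [this]
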